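/- Let G be a locally compact, second countable, Hausdorff topological group and let Λ ⊆ G be a closed subset with finite local complexity. Equip the groupoid 𝒢(Λ) = {(x, P) ∈ G × 𝒞(G) : P ∈ Ω₀(Λ), x⁻¹ ∈ P, xP ∈ Ω₀(Λ)} with the subspace topology from G × 𝒞(G). Then the function ψ : 𝒢(Λ) × 𝒢(Λ) → ℝ defined by ψ((x, P), (y, Q)) = 1 if x = y and 0 otherwise is continuous. -/

import Mathlib

open Set Filter Topology Pointwise

/-- The space `𝒞(G)` of closed subsets of a topological space `G`. -/
structure CFClosed (G : Type*) [TopologicalSpace G] where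
  carrier : Set G
  isClosed' : IsClosed carrier

namespace CFClosed

variable {G : Type*} [TopologicalSpace G]

instance : SetLike (CFClosed G) G where
  coe := CFClosed.carrier
  coe_injective := fun P Q h => by cases P; cases Q; congr

/-- The Chabauty–Fell topology on `𝒞(G)`, generated by the subbasis consisting of
`O_K = {C | C ∩ K = ∅}` for `K` compact and `O_U = {C | C ∩ U ≠ ∅}` for `U` open. -/
instance chabautyFell : TopologicalSpace (CFClosed G) :=
  TopologicalSpace.generateFrom
    ({s | ∃ K : Set G, IsCompact K ∧ s = {C : CFClosed G | (C : Set G) ∩ K = ∅}} ∪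
     {s | ∃ U : Set G, IsOpen U ∧ s = {C : CFClosed G | ((C : Set G) ∩ U).Nonempty}})

end CFClosed
section Hulls

variable {G : Type*} [TopologicalSpace G] [Group G]

/-- The hull `Ω(Λ)` of a closed subset `Λ ⊆ G`: the closure in the Chabauty–Fell topology
of the set of left translates of `Λ`. -/
def hull (Λ : CFClosed G) : Set (CFClosed G) :=
  closure {P : CFClosed G | ∃ g : G, (P : Set G) = g • (Λ : Set G)}

/-- The discrete hull `Ω₀(Λ)`: elements of the hull containing the identity. -/
def discreteHull (Λ : CFClosed G) : Set (CFClosed G) :=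
  {P ∈ hull Λ | (1 : G) ∈ P}

/-- Finite local complexity: for every compact `K ⊆ G` there is a finite collection `𝓕` of
finite subsets of `G` such that every `P ∈ Ω₀(Λ)` satisfies `K ∩ P = h • F` for some
`h ∈ G`, `F ∈ 𝓕`. -/
def FLC (Λ : CFClosed G) : Prop :=
  ∀ K : Set G, IsCompact K → ∃ 𝓕 : Set (Set G), 𝓕.Finite ∧ (∀ F ∈ 𝓕, F.Finite) ∧
    ∀ P ∈ discreteHull Λ, ∃ h : G, ∃ F ∈ 𝓕, K ∩ (P : Set G) = h • F

end Hulls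

open Pointwise

/-- The groupoid `𝒢(Λ) = {(x, P) : P ∈ Ω₀(Λ), x⁻¹ ∈ P, xP ∈ Ω₀(Λ)}` of a point set,
as a subset of `G × 𝒞(G)`. -/
def pointSetGroupoid {G : Type*} [TopologicalSpace G] [Group G] [IsTopologicalGroup G]
    (Λ : CFClosed G) : Set (G × CFClosed G) :=
  {p : G × CFClosed G | p.2 ∈ discreteHull Λ ∧ p.1⁻¹ ∈ p.2 ∧
    (⟨p.1 • (p.2 : Set G), p.2.isClosed'.smul p.1⟩ : CFClosed G) ∈ discreteHull Λ}


lemma key {G : Type*} [TopologicalSpace G] [Group G] [IsTopologicalGroup G]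
    (Λ : CFClosed G) (hFLC : FLC Λ) (K : Set G) (hK : IsCompact K) :
    ∃ D : Set G, D.Finite ∧ ∀ q : G × CFClosed G, q ∈ pointSetGroupoid Λ →
      q.1⁻¹ ∈ K → q.1⁻¹ ∈ D := by
  obtain ⟨𝓕, h𝓕fin, h𝓕, hall⟩ := hFLC (K ∪ {1}) (hK.union isCompact_singleton)
  refine ⟨⋃ F ∈ 𝓕, ⋃ f ∈ F, f⁻¹ • F, h𝓕fin.biUnion fun F hF =>
    ((h𝓕 F hF).biUnion fun f _ => (h𝓕 F hF).smul_set), ?_⟩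
  rintro ⟨x, P⟩ ⟨hP, hxP, -⟩ hxK
  obtain ⟨h, F, hF, hKP⟩ := hall P hP
  have h1 : (1 : G) ∈ (K ∪ {1}) ∩ (P : Set G) := ⟨Or.inr rfl, hP.2⟩
  have hx : x⁻¹ ∈ (K ∪ {1}) ∩ (P : Set G) := ⟨Or.inl hxK, hxP⟩
  rw [hKP] at h1 hx
  obtain ⟨f0, hf0, hf0e⟩ := h1
  obtain ⟨f1, hf1, hf1e⟩ := hx
  have hh : h = f0⁻¹ :=
    eq_inv_of_mul_eq_one_left (by simpa [smul_eq_mul] using hf0e)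
  refine mem_biUnion hF (mem_biUnion hf0 ?_)
  exact ⟨f1, hf1, by rw [hh] at hf1e; exact hf1e⟩

/-- For an FLC point set `Λ`, the function `ψ((x, P), (y, Q)) = 1` if `x = y` and `0`
otherwise is continuous on `𝒢(Λ) × 𝒢(Λ)`. -/
theorem continuous_psi (G : Type*) [TopologicalSpace G] [Group G] [IsTopologicalGroup G]
    [LocallyCompactSpace G] [SecondCountableTopology G] [T2Space G] [DecidableEq G]
    (Λ : CFClosed G) (hFLC : FLC Λ) :
    Continuous (fun p : pointSetGroupoid Λ × pointSetGroupoid Λ =>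
      if ((p.1 : G × CFClosed G)).1 = ((p.2 : G × CFClosed G)).1 then (1 : ℝ) else 0) := by
  have hc1 : Continuous (fun q : pointSetGroupoid Λ × pointSetGroupoid Λ =>
      ((q.1 : G × CFClosed G)).1) := (continuous_subtype_val.comp continuous_fst).fst
  have hc2 : Continuous (fun q : pointSetGroupoid Λ × pointSetGroupoid Λ =>
      ((q.2 : G × CFClosed G)).1) := (continuous_subtype_val.comp continuous_snd).fst
  rw [continuous_iff_continuousAt]
  intro p
  by_cases hxy : ((p.1 : G × CFClosed G)).1 = ((p.2 : G × CFClosed G)).1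
  · set x := ((p.1 : G × CFClosed G)).1 with hxdef
    obtain ⟨K, hKc, hKn⟩ := exists_compact_mem_nhds (x⁻¹)
    obtain ⟨D, hDfin, hD⟩ := key Λ hFLC K hKc
    set V : Set G := interior K ∩ (D \ {x⁻¹})ᶜ with hVdef
    have hVo : IsOpen V :=
      isOpen_interior.inter (hDfin.subset diff_subset).isClosed.isOpen_compl
    have hxV : x⁻¹ ∈ V := ⟨mem_interior_iff_mem_nhds.2 hKn, fun h => h.2 rfl⟩
    have hVeq : ∀ q : pointSetGroupoid Λ, ((q : G × CFClosed G)).1⁻¹ ∈ V →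
        ((q : G × CFClosed G)).1 = x := by
      intro q hq
      have hD' := hD q.val q.prop (interior_subset hq.1)
      have : ((q : G × CFClosed G)).1⁻¹ = x⁻¹ := by
        by_contra hne
        exact hq.2 ⟨hD', hne⟩
      exact inv_injective this
    have hW : {q : pointSetGroupoid Λ × pointSetGroupoid Λ |
        ((q.1 : G × CFClosed G)).1⁻¹ ∈ V ∧ ((q.2 : G × CFClosed G)).1⁻¹ ∈ V} ∈ 𝓝 p := by
      refine IsOpen.mem_nhds ?_ ⟨hxV, by rw [← hxy]; exact hxV⟩
      exact (hVo.preimage hc1.inv).inter (hVo.preimage hc2.inv)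
    refine ContinuousAt.congr (continuousAt_const (y := (1 : ℝ)))
      (Filter.eventuallyEq_of_mem hW ?_)
    intro q hq
    simp [hVeq q.1 hq.1, hVeq q.2 hq.2]
  · have hW : {q : pointSetGroupoid Λ × pointSetGroupoid Λ |
        ((q.1 : G × CFClosed G)).1 ≠ ((q.2 : G × CFClosed G)).1} ∈ 𝓝 p := by
      refine IsOpen.mem_nhds ?_ hxy
      have : IsOpen {z : G × G | z.1 ≠ z.2} := isClosed_diagonal.isOpen_compl
      exact this.preimage (hc1.prodMk hc2)
    refine ContinuousAt.congr (continuousAt_const (y := (0 : ℝ)))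
      (Filter.eventuallyEq_of_mem hW ?_)
    intro q hq
    simp only [if_neg hq]
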